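/- Let n ≥ 4 and suppose integers |S_1|, …, |S_n| ≥ 2 satisfy the polygon inequality |S_i| − 1 ≤ ∑_{j≠i}(|S_j| − 1). Then the quantity Q = ∏_i |S_i| − (1 + ∑_i |S_i|(|S_i| − 1)) exceeds ∏_i (|S_i| − 1) by at least 2^n − 2n − 2 ≥ 6. -/

import Mathlib

open Finset

lemma key_prod {ι : Type*} [DecidableEq ι] (s : Finset ι) (c : ι → ℤ)
    (hc : ∀ i ∈ s, 1 ≤ c i) (hcard : 3 ≤ s.card) :
    ∏ i ∈ s, c i + 2 * ∑ i ∈ s, c i ≤ ∏ i ∈ s, (1 + c i) := by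
  induction s using Finset.cons_induction with
  | empty => simp at hcard
  | cons a t ha ih =>
    have hca : 1 ≤ c a := hc a (Finset.mem_cons_self a t)
    have hct : ∀ i ∈ t, 1 ≤ c i := fun i hi => hc i (Finset.mem_cons.2 (Or.inr hi))
    have hQ1 : (1 : ℤ) ≤ ∏ i ∈ t, c i := by
      calc (1:ℤ) = ∏ _i ∈ t, 1 := by simp
      _ ≤ ∏ i ∈ t, c i := Finset.prod_le_prod (by simp) (fun i hi => hct i hi)
    have hS : (t.card : ℤ) ≤ ∑ i ∈ t, c i := by
      have := Finset.card_nsmul_le_sum t c 1 hct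
      simpa using this
    rw [Finset.prod_cons, Finset.sum_cons, Finset.prod_cons]
    by_cases h3 : 3 ≤ t.card
    · have hP := ih hct h3
      have hS3 : (3 : ℤ) ≤ ∑ i ∈ t, c i := by
        calc (3:ℤ) ≤ (t.card : ℤ) := by exact_mod_cast h3
        _ ≤ _ := hS
      nlinarith [mul_le_mul_of_nonneg_left hP (by linarith : (0:ℤ) ≤ c a),
        mul_nonneg (by linarith : (0:ℤ) ≤ c a) (by linarith : (0:ℤ) ≤ ∑ i ∈ t, c i - 1)]
    · have h2 : t.card = 2 := by
        have := Finset.card_cons ha ▸ hcard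
        omega
      obtain ⟨x, y, hxy, rfl⟩ := Finset.card_eq_two.mp h2
      have hcx : 1 ≤ c x := hct x (by simp)
      have hcy : 1 ≤ c y := hct y (by simp)
      rw [Finset.prod_insert (by simpa using hxy), Finset.sum_insert (by simpa using hxy),
        Finset.prod_insert (by simpa using hxy), Finset.prod_singleton,
        Finset.sum_singleton, Finset.prod_singleton]
      nlinarith [mul_nonneg (by linarith : (0:ℤ) ≤ c a - 1) (by linarith : (0:ℤ) ≤ c x - 1),
        mul_nonneg (by linarith : (0:ℤ) ≤ c y) (by linarith : (0:ℤ) ≤ c a + c x - 2),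
        mul_nonneg (mul_nonneg (by linarith : (0:ℤ) ≤ c a - 1) (by linarith : (0:ℤ) ≤ c x - 1)) (by linarith : (0:ℤ) ≤ c y)]

lemma main_ind (n : ℕ) (hn : 4 ≤ n) :
    ∀ (N : ℕ) (b : Fin n → ℤ), (∀ i, 1 ≤ b i) →
      (∀ i, b i ≤ ∑ j ∈ Finset.univ.erase i, b j) →
      (∑ i, b i ≤ (N : ℤ)) →
      (2:ℤ)^n - 2*n - 2 ≤ ∏ i, (1 + b i) - ∏ i, b i - 1 - ∑ i, b i - ∑ i, (b i)^2 := by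
  have hne : Nonempty (Fin n) := ⟨⟨0, by omega⟩⟩
  intro N
  induction N with
  | zero =>
    intro b hb _ hsum
    exfalso
    have h1 : (((Finset.univ : Finset (Fin n)).card : ℕ) : ℤ) ≤ ∑ i, b i := by
      have := Finset.card_nsmul_le_sum (Finset.univ : Finset (Fin n)) b 1 (fun i _ => hb i)
      simpa using this
    rw [Finset.card_univ, Fintype.card_fin] at h1
    have : (4:ℤ) ≤ (n:ℤ) := by exact_mod_cast hn
    norm_num at hsum
    linarith
  | succ N ih =>
    intro b hb hpoly hsum
    by_cases hex : ∃ i, 2 ≤ b i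
    · obtain ⟨iw, hiw⟩ := hex
      obtain ⟨i0, -, hmax⟩ := Finset.exists_max_image Finset.univ b ⟨iw, Finset.mem_univ iw⟩
      have hmax' : ∀ j, b j ≤ b i0 := fun j => hmax j (Finset.mem_univ j)
      have hM2 : 2 ≤ b i0 := le_trans hiw (hmax' iw)
      set M := b i0 with hMdef
      set b' := Function.update b i0 (M - 1) with hb'def
      have hmem : i0 ∈ (Finset.univ : Finset (Fin n)) := Finset.mem_univ i0
      set P := ∏ j ∈ Finset.univ.erase i0, (1 + b j) with hP
      set Q := ∏ j ∈ Finset.univ.erase i0, b j with hQ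
      set S := ∑ j ∈ Finset.univ.erase i0, b j with hS
      set E := ∑ j ∈ Finset.univ.erase i0, (b j)^2 with hE
      have hb'i0 : b' i0 = M - 1 := Function.update_self _ _ _
      have hb'e : ∀ j ∈ Finset.univ.erase i0, b' j = b j := fun j hj =>
        Function.update_of_ne (Finset.ne_of_mem_erase hj) _ _
      -- decompositions for b
      have d1 : ∏ i, (1 + b i) = (1 + M) * P :=
        (Finset.mul_prod_erase Finset.univ (fun j => 1 + b j) hmem).symm
      have d2 : ∏ i, b i = M * Q := (Finset.mul_prod_erase Finset.univ b hmem).symm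
      have d3 : ∑ i, b i = M + S := (Finset.add_sum_erase Finset.univ b hmem).symm
      have d4 : ∑ i, (b i)^2 = M^2 + E :=
        (Finset.add_sum_erase Finset.univ (fun j => (b j)^2) hmem).symm
      -- decompositions for b'
      have e1 : ∏ i, (1 + b' i) = M * P := by
        rw [← Finset.mul_prod_erase Finset.univ (fun j => 1 + b' j) hmem, hb'i0]
        have : ∏ j ∈ Finset.univ.erase i0, (1 + b' j) = P :=
          Finset.prod_congr rfl (fun j hj => by rw [hb'e j hj])
        rw [this]; ring
      have e2 : ∏ i, b' i = (M - 1) * Q := by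
        rw [← Finset.mul_prod_erase Finset.univ b' hmem, hb'i0]
        have : ∏ j ∈ Finset.univ.erase i0, b' j = Q :=
          Finset.prod_congr rfl (fun j hj => by rw [hb'e j hj])
        rw [this]
      have e3 : ∑ i, b' i = (M - 1) + S := by
        rw [← Finset.add_sum_erase Finset.univ b' hmem, hb'i0]
        have : ∑ j ∈ Finset.univ.erase i0, b' j = S :=
          Finset.sum_congr rfl (fun j hj => by rw [hb'e j hj])
        rw [this]
      have e4 : ∑ i, (b' i)^2 = (M - 1)^2 + E := by
        rw [← Finset.add_sum_erase Finset.univ (fun j => (b' j)^2) hmem, hb'i0]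
        have : ∑ j ∈ Finset.univ.erase i0, (b' j)^2 = E :=
          Finset.sum_congr rfl (fun j hj => by rw [hb'e j hj])
        rw [this]
      -- hypotheses for b'
      have hb'eq : ∀ i, i ≠ i0 → b' i = b i := fun i h => Function.update_of_ne h _ _
      have hb1' : ∀ i, 1 ≤ b' i := by
        intro i
        rcases eq_or_ne i i0 with h | h
        · rw [h, hb'i0]; omega
        · rw [hb'eq i h]; exact hb i
      have hpoly' : ∀ i, b' i ≤ ∑ j ∈ Finset.univ.erase i, b' j := by
        intro i
        rcases eq_or_ne i i0 with h | hne'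
        · rw [h, hb'i0]
          have h2 : ∑ j ∈ Finset.univ.erase i0, b' j = S :=
            Finset.sum_congr rfl (fun j hj => by rw [hb'e j hj])
          rw [h2]
          have := hpoly i0
          rw [← hS] at this
          omega
        · rw [hb'eq i hne']
          have hi0mem : i0 ∈ Finset.univ.erase i := Finset.mem_erase.2 ⟨(Ne.symm hne'), Finset.mem_univ i0⟩
          have dec : ∑ j ∈ Finset.univ.erase i, b' j
              = (M - 1) + ∑ j ∈ (Finset.univ.erase i).erase i0, b' j := by
            rw [← Finset.add_sum_erase _ b' hi0mem, hb'i0]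
          have dec2 : ∑ j ∈ (Finset.univ.erase i).erase i0, b' j
              = ∑ j ∈ (Finset.univ.erase i).erase i0, b j :=
            Finset.sum_congr rfl (fun j hj => Function.update_of_ne (Finset.ne_of_mem_erase hj) _ _)
          have hcard2 : ((Finset.univ.erase i).erase i0).card = n - 2 := by
            rw [Finset.card_erase_of_mem hi0mem, Finset.card_erase_of_mem (Finset.mem_univ i),
              Finset.card_univ, Fintype.card_fin]
            omega
          have hrest : (1:ℤ) ≤ ∑ j ∈ (Finset.univ.erase i).erase i0, b j := by
            have h := Finset.card_nsmul_le_sum ((Finset.univ.erase i).erase i0) b 1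
              (fun j _ => hb j)
            rw [hcard2] at h
            have : (1:ℤ) ≤ ((n-2 : ℕ) : ℤ) := by
              have : 2 ≤ n - 2 := by omega
              exact_mod_cast Nat.one_le_iff_ne_zero.mpr (by omega)
            calc (1:ℤ) ≤ ((n-2:ℕ):ℤ) := this
            _ ≤ _ := by simpa using h
          have := hmax' i
          rw [dec, dec2]
          omega
      have hsum' : ∑ i, b' i ≤ (N : ℤ) := by
        rw [e3]
        rw [d3] at hsum
        push_cast at hsum ⊢
        omega
      have ihb := ih b' hb1' hpoly' hsum'
      rw [e1, e2, e3, e4] at ihb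
      -- key lemma
      have hcard_er : 3 ≤ (Finset.univ.erase i0).card := by
        rw [Finset.card_erase_of_mem hmem, Finset.card_univ, Fintype.card_fin]
        omega
      have hkey : Q + 2 * S ≤ P := by
        have := key_prod (Finset.univ.erase i0) b (fun j _ => hb j) hcard_er
        rw [← hP, ← hQ, ← hS] at this
        exact this
      have hMS : M ≤ S := by
        have := hpoly i0
        rw [← hS] at this
        exact this
      rw [d1, d2, d3, d4]
      nlinarith [ihb, hkey, hMS]
    · push_neg at hex
      have hone : ∀ i, b i = 1 := fun i => le_antisymm (by linarith [hex i]) (hb i)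
      have hbb : b = fun _ => (1:ℤ) := funext hone
      subst hbb
      simp only [Finset.prod_const, Finset.sum_const, Finset.card_univ, Fintype.card_fin,
        nsmul_eq_mul, mul_one, one_pow]
      norm_num
      ring_nf
      nlinarith [pow_pos (by norm_num : (0:ℤ) < 2) n]

lemma two_pow_bound (n : ℕ) (hn : 4 ≤ n) : (6:ℤ) ≤ (2:ℤ)^n - 2*n - 2 := by
  induction n with
  | zero => omega
  | succ k ih =>
    rcases Nat.lt_or_ge k 4 with h | h
    · interval_cases k <;> revert hn <;> norm_num
    · have := ih (by omega)
      have h2 : (0:ℤ) < 2^k := by positivity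
      rw [pow_succ]
      push_cast
      linarith

/-- For `n ≥ 4` support sizes `≥ 2` satisfying the polygon inequality, the quantity
`Q = ∏|S_i| − (1 + ∑|S_i|(|S_i|−1))` exceeds `∏(|S_i|−1)` by at least `2^n − 2n − 2 ≥ 6`. -/
theorem stmt_14 (n : ℕ) (hn : 4 ≤ n) (m : Fin n → ℤ) (hm : ∀ i, 2 ≤ m i)
    (hpoly : ∀ i, m i - 1 ≤ ∑ j ∈ Finset.univ.erase i, (m j - 1)) :
    ((2 : ℤ) ^ n - 2 * n - 2 ≤
        (∏ i, m i - (1 + ∑ i, m i * (m i - 1))) - ∏ i, (m i - 1)) ∧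
      (6 : ℤ) ≤ (2 : ℤ) ^ n - 2 * n - 2 := by
  refine ⟨?_, two_pow_bound n hn⟩
  set b : Fin n → ℤ := fun i => m i - 1 with hbdef
  have hb1 : ∀ i, 1 ≤ b i := fun i => by have := hm i; simp [hbdef]; omega
  have hbpoly : ∀ i, b i ≤ ∑ j ∈ Finset.univ.erase i, b j := fun i => hpoly i
  have hN : ∑ i, b i ≤ ((∑ i, b i).toNat : ℤ) := le_of_eq (Int.toNat_of_nonneg (by
    apply Finset.sum_nonneg; intro i _; linarith [hb1 i])).symm
  have hmain := main_ind n hn ((∑ i, b i).toNat) b hb1 hbpoly hN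
  have hm1 : ∀ i, m i = 1 + b i := fun i => by simp [hbdef]
  have hprod1 : ∏ i, m i = ∏ i, (1 + b i) := Finset.prod_congr rfl (fun i _ => hm1 i)
  have hprod2 : ∏ i, (m i - 1) = ∏ i, b i := rfl
  have hsum1 : ∑ i, m i * (m i - 1) = ∑ i, b i + ∑ i, (b i)^2 := by
    rw [← Finset.sum_add_distrib]
    refine Finset.sum_congr rfl (fun i _ => ?_)
    have := hm1 i
    rw [this]
    ring
  rw [hprod1, hprod2, hsum1]
  linarith [hmain]
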